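/- Let Ω be a set, let l and k be nonnegative integers, and let g_1, g_2 : ℤ → Ω be periodic functions with periods n_1 and n_2 respectively. If the restriction of g_1 to {1, …, n_1} and the restriction of g_2 to {1, …, n_2} are injective, and gcd(n_1, n_2) = 1, then #{ i ∈ ℤ : k+1 ≤ i ≤ k + l·n_1 n_2 and g_1(i) = g_2(i) } ≤ l · min(n_1, n_2). -/

import Mathlib

lemma aux_eq_of_modEq {Ω : Type*} (g : ℤ → Ω) (n : ℕ)
    (hper : ∀ j : ℤ, g (j + n) = g j) {i j : ℤ} (h : i ≡ j [ZMOD n]) : g i = g j := by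
  obtain ⟨t, ht⟩ := h.dvd
  have hp : Function.Periodic g (n : ℤ) := hper
  have := (hp.zsmul t) i
  rw [zsmul_eq_mul] at this
  have hj : j = i + t * (n : ℤ) := by linarith
  rw [hj]; exact this.symm

lemma aux_modEq_of_eq {Ω : Type*} (g : ℤ → Ω) (n : ℕ) (hn : 0 < n)
    (hper : ∀ j : ℤ, g (j + n) = g j) (hinj : Set.InjOn g (Set.Icc (1 : ℤ) n))
    {i j : ℤ} (h : g i = g j) : i ≡ j [ZMOD n] := by
  have hnz : (n : ℤ) ≠ 0 := by exact_mod_cast hn.ne'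
  have hnpos : (0 : ℤ) < n := by exact_mod_cast hn
  set r : ℤ → ℤ := fun x => (x - 1) % n + 1 with hr
  have hmem : ∀ x : ℤ, r x ∈ Set.Icc (1 : ℤ) n := by
    intro x
    constructor
    · have := Int.emod_nonneg (x - 1) hnz; simp [hr]; omega
    · have := Int.emod_lt_of_pos (x - 1) hnpos; simp [hr]; omega
  have hmod : ∀ x : ℤ, r x ≡ x [ZMOD n] := by
    intro x
    have h1 : (x - 1) % n ≡ x - 1 [ZMOD n] := Int.emod_emod_of_dvd _ dvd_rfl
    have := h1.add_right 1
    simpa [hr] using this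
  have heq : g (r i) = g (r j) := by
    calc g (r i) = g i := aux_eq_of_modEq g n hper (hmod i)
    _ = g j := h
    _ = g (r j) := (aux_eq_of_modEq g n hper (hmod j)).symm
  have := hinj (hmem i) (hmem j) heq
  calc i ≡ r i [ZMOD n] := (hmod i).symm
  _ = r j := this
  _ ≡ j [ZMOD n] := hmod j

lemma aux_window {Ω : Type*} [DecidableEq Ω]
    (g₁ g₂ : ℤ → Ω) (n₁ n₂ : ℕ) (hn₁ : 0 < n₁) (hn₂ : 0 < n₂)
    (hper₁ : ∀ j : ℤ, g₁ (j + n₁) = g₁ j) (hper₂ : ∀ j : ℤ, g₂ (j + n₂) = g₂ j)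
    (hinj₁ : Set.InjOn g₁ (Set.Icc (1 : ℤ) n₁))
    (hcop : Nat.Coprime n₁ n₂) (a : ℤ) :
    ((Finset.Icc (a + 1) (a + n₁ * n₂)).filter fun i => g₁ i = g₂ i).card ≤ n₂ := by
  have hnz : (n₂ : ℤ) ≠ 0 := by exact_mod_cast hn₂.ne'
  have key := Finset.card_le_card_of_injOn (f := fun i : ℤ => i % n₂)
    (s := (Finset.Icc (a + 1) (a + n₁ * n₂)).filter fun i => g₁ i = g₂ i)
    (t := Finset.Ico (0 : ℤ) n₂) ?_ ?_
  · simpa using key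
  · intro i hi
    simp only [Finset.mem_coe, Finset.mem_Ico]
    exact ⟨Int.emod_nonneg i hnz, Int.emod_lt_of_pos i (by exact_mod_cast hn₂)⟩
  · intro i hi j hj hij
    simp only [Finset.coe_filter, Set.mem_setOf_eq, Finset.mem_Icc] at hi hj
    have h2 : i ≡ j [ZMOD n₂] := hij
    have hg2 : g₂ i = g₂ j := aux_eq_of_modEq g₂ n₂ hper₂ h2
    have hg1 : g₁ i = g₁ j := by rw [hi.2, hj.2, hg2]
    have h1 : i ≡ j [ZMOD n₁] := aux_modEq_of_eq g₁ n₁ hn₁ hper₁ hinj₁ hg1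
    have hcop' : (Int.natAbs n₁).Coprime (Int.natAbs n₂) := by simpa using hcop
    have h12 : i ≡ j [ZMOD (n₁ * n₂ : ℤ)] :=
      (Int.modEq_and_modEq_iff_modEq_mul hcop').mp ⟨h1, h2⟩
    have hd : (n₁ * n₂ : ℤ) ∣ j - i := h12.dvd
    have habs : |j - i| < (n₁ : ℤ) * n₂ := by
      rw [abs_lt]
      obtain ⟨⟨hi1, hi2⟩, _⟩ := hi
      obtain ⟨⟨hj1, hj2⟩, _⟩ := hj
      constructor <;> linarith
    have := Int.eq_zero_of_abs_lt_dvd hd habs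
    omega

lemma aux_window_min {Ω : Type*} [DecidableEq Ω]
    (g₁ g₂ : ℤ → Ω) (n₁ n₂ : ℕ) (hn₁ : 0 < n₁) (hn₂ : 0 < n₂)
    (hper₁ : ∀ j : ℤ, g₁ (j + n₁) = g₁ j) (hper₂ : ∀ j : ℤ, g₂ (j + n₂) = g₂ j)
    (hinj₁ : Set.InjOn g₁ (Set.Icc (1 : ℤ) n₁)) (hinj₂ : Set.InjOn g₂ (Set.Icc (1 : ℤ) n₂))
    (hcop : Nat.Coprime n₁ n₂) (a : ℤ) :
    ((Finset.Icc (a + 1) (a + n₁ * n₂)).filter fun i => g₁ i = g₂ i).card ≤ min n₁ n₂ := by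
  rw [le_min_iff]
  constructor
  · have := aux_window g₂ g₁ n₂ n₁ hn₂ hn₁ hper₂ hper₁ hinj₂ hcop.symm a
    have hs : ((Finset.Icc (a + 1) (a + n₂ * n₁)).filter fun i => g₂ i = g₁ i)
        = ((Finset.Icc (a + 1) (a + n₁ * n₂)).filter fun i => g₁ i = g₂ i) := by
      rw [mul_comm (n₂ : ℤ)]
      exact Finset.filter_congr fun x _ => by simp [eq_comm]
    rwa [hs] at this
  · exact aux_window g₁ g₂ n₁ n₂ hn₁ hn₂ hper₁ hper₂ hinj₁ hcop a

lemma aux_split (a M N : ℤ) (hM : 0 ≤ M) (hN : 0 ≤ N) :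
    Finset.Icc (a + 1) (a + M + N) = Finset.Icc (a + 1) (a + M) ∪ Finset.Icc (a + M + 1) (a + M + N) := by
  ext i; simp only [Finset.mem_union, Finset.mem_Icc]; omega

theorem card_agree_le_of_periodic_coprime_injective {Ω : Type*} [DecidableEq Ω]
    (g₁ g₂ : ℤ → Ω) (n₁ n₂ : ℕ) (hn₁ : 0 < n₁) (hn₂ : 0 < n₂) (l k : ℕ)
    (hper₁ : ∀ j : ℤ, g₁ (j + n₁) = g₁ j) (hper₂ : ∀ j : ℤ, g₂ (j + n₂) = g₂ j)
    (hinj₁ : Set.InjOn g₁ (Set.Icc (1 : ℤ) n₁)) (hinj₂ : Set.InjOn g₂ (Set.Icc (1 : ℤ) n₂))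
    (hcop : Nat.Coprime n₁ n₂) :
    ((Finset.Icc ((k : ℤ) + 1) ((k : ℤ) + l * n₁ * n₂)).filter fun i => g₁ i = g₂ i).card ≤
      l * min n₁ n₂ := by
  induction l with
  | zero => simp
  | succ l ih =>
    have hP : (k : ℤ) + ((l + 1 : ℕ) : ℤ) * n₁ * n₂
        = (k : ℤ) + (l : ℤ) * n₁ * n₂ + (n₁ : ℤ) * n₂ := by push_cast; ring
    rw [hP, aux_split _ _ _ (by positivity) (by positivity), Finset.filter_union]
    calc _ ≤ _ := Finset.card_union_le _ _
    _ ≤ l * min n₁ n₂ + min n₁ n₂ := by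
        exact add_le_add ih
          (aux_window_min g₁ g₂ n₁ n₂ hn₁ hn₂ hper₁ hper₂ hinj₁ hinj₂ hcop _)
    _ = (l + 1) * min n₁ n₂ := by ring
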